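/- Let X be a cluster-tilting subcategory of a triangulated category C with split idempotents, and let A₀ →f₀ A₁ →f₁ A₂ →f₂ ΣA₀ be a distinguished triangle in C. If f̄₂ = 0 in C/X (i.e. f₂ factors through an object of X), then in the quotient category C/X the morphism f̄₁ is a cokernel of f̄₀; equivalently, the sequence A₀ → A₁ → A₂ → 0 is right exact in C/X. -/

import Mathlib

open CategoryTheory CategoryTheory.Limits CategoryTheory.Pretriangulated

universe v u

variable {C : Type u} [Category.{v} C] [Preadditive C] [HasZeroObject C]
  [HasShift C ℤ] [∀ n : ℤ, (shiftFunctor C n).Additive] [Pretriangulated C]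

/-- `f` factors through an object satisfying `X`. -/
def FactorsThru (X : C → Prop) {A B : C} (f : A ⟶ B) : Prop :=
  ∃ (X₀ : C) (g : A ⟶ X₀) (h : X₀ ⟶ B), X X₀ ∧ g ≫ h = f

/-- The hom relation on `C` identifying two morphisms when their difference factors
through an object of `X`; the quotient category `C/X` is the quotient by this relation. -/
def homRelOf (X : C → Prop) : HomRel C :=
  fun {A B : C} (f g : A ⟶ B) => FactorsThru X (f - g)

/-- The additive quotient category `C/X`. -/
abbrev QuotCat (X : C → Prop) := CategoryTheory.Quotient (homRelOf X)

/-- The quotient functor `C ⥤ C/X`, sending a morphism `f` to its class `f̄`. -/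
abbrev quotFunctor (X : C → Prop) : C ⥤ QuotCat X := Quotient.functor _

/-- `X` is a full additive subcategory: it contains the zero objects and is closed under
isomorphisms, finite direct sums and direct summands. -/
structure IsAdditiveClosed (X : C → Prop) : Prop where
  zero : ∀ Z : C, IsZero Z → X Z
  iso : ∀ {A B : C}, (A ≅ B) → X A → X B
  biprod : ∀ {A B : C} (b : BinaryBicone A B), Nonempty b.IsBilimit → X A → X B → X b.pt
  summand : ∀ {A B : C} (i : A ⟶ B) (p : B ⟶ A), i ≫ p = 𝟙 A → X B → X A

/-- `X` is a cluster-tilting subcategory of the triangulated category `C`: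
it is a full additive subcategory such that (i) `Hom(X₁, ΣX₂) = 0` for all `X₁, X₂ ∈ X`, and
(ii) every object `A` fits into a distinguished triangle `X₀ ⟶ X₁ ⟶ A ⟶ ΣX₀` with
`X₀, X₁ ∈ X`. -/
structure IsClusterTilting (X : C → Prop) extends IsAdditiveClosed X : Prop where
  hom_shift_zero : ∀ {X₁ X₂ : C}, X X₁ → X X₂ → ∀ f : X₁ ⟶ X₂⟦(1 : ℤ)⟧, f = 0
  exists_triangle : ∀ A : C, ∃ (X₀ X₁ : C) (f : X₀ ⟶ X₁) (g : X₁ ⟶ A) (h : A ⟶ X₀⟦(1 : ℤ)⟧),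
    X X₀ ∧ X X₁ ∧ Triangle.mk f g h ∈ distTriang C

/-- `f : A ⟶ B` is `X`-monic: every morphism from `A` to an object of `X` factors through `f`. -/
def XMonic (X : C → Prop) {A B : C} (f : A ⟶ B) : Prop :=
  ∀ X' : C, X X' → ∀ u : A ⟶ X', ∃ v : B ⟶ X', f ≫ v = u

/-- `f : A ⟶ B` is `X`-epic: every morphism from an object of `X` to `B` factors through `f`. -/
def XEpic (X : C → Prop) {A B : C} (f : A ⟶ B) : Prop :=
  ∀ X' : C, X X' → ∀ u : X' ⟶ B, ∃ v : X' ⟶ A, v ≫ f = u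

section Aux

variable {X : C → Prop}

lemma factorsThru_zero (hX : IsAdditiveClosed X) {A B : C} :
    FactorsThru X (0 : A ⟶ B) := by
  obtain ⟨Z, hZ⟩ := HasZeroObject.zero (C := C)
  exact ⟨Z, 0, 0, hX.zero Z hZ, by simp⟩

lemma factorsThru_comp_left {A B D : C} (w : A ⟶ B) {f : B ⟶ D}
    (hf : FactorsThru X f) : FactorsThru X (w ≫ f) := by
  obtain ⟨X₀, g, h, hX₀, e⟩ := hf
  exact ⟨X₀, w ≫ g, h, hX₀, by rw [Category.assoc, e]⟩

lemma factorsThru_comp_right {A B D : C} {f : A ⟶ B} (w : B ⟶ D)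
    (hf : FactorsThru X f) : FactorsThru X (f ≫ w) := by
  obtain ⟨X₀, g, h, hX₀, e⟩ := hf
  exact ⟨X₀, g, h ≫ w, hX₀, by rw [← Category.assoc, e]⟩

lemma factorsThru_neg {A B : C} {f : A ⟶ B} (hf : FactorsThru X f) :
    FactorsThru X (-f) := by
  obtain ⟨X₀, g, h, hX₀, e⟩ := hf
  exact ⟨X₀, g, -h, hX₀, by rw [Preadditive.comp_neg, e]⟩

lemma factorsThru_add (hX : IsAdditiveClosed X) {A B : C} {f g : A ⟶ B}
    (hf : FactorsThru X f) (hg : FactorsThru X g) : FactorsThru X (f + g) := by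
  obtain ⟨X₁, g₁, h₁, hX₁, e₁⟩ := hf
  obtain ⟨X₂, g₂, h₂, hX₂, e₂⟩ := hg
  refine ⟨X₁ ⊞ X₂, biprod.lift g₁ g₂, biprod.desc h₁ h₂,
    hX.biprod (BinaryBiproduct.bicone X₁ X₂) ⟨BinaryBiproduct.isBilimit X₁ X₂⟩ hX₁ hX₂, ?_⟩
  rw [biprod.lift_desc, e₁, e₂]

lemma congruence_homRelOf (hX : IsAdditiveClosed X) : Congruence (homRelOf X) where
  equivalence := by
    refine ⟨fun f => ?_, fun {f g} h => ?_, fun {f g h} h₁ h₂ => ?_⟩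
    · show FactorsThru X (f - f)
      rw [sub_self]; exact factorsThru_zero hX
    · show FactorsThru X (g - f)
      rw [← neg_sub f g]; exact factorsThru_neg h
    · show FactorsThru X (f - h)
      have := factorsThru_add hX h₁ h₂
      rwa [sub_add_sub_cancel] at this
  comp_left := by
    intro P Q R w g g' h
    show FactorsThru X (w ≫ g - w ≫ g')
    rw [← Preadditive.comp_sub]
    exact factorsThru_comp_left w h
  comp_right := by
    intro P Q R f f' w h
    show FactorsThru X (f ≫ w - f' ≫ w)
    rw [← Preadditive.sub_comp]
    exact factorsThru_comp_right w h

/-- Any morphism `W⟦-1⟧ ⟶ X'` between (a negative shift of) objects of a cluster-tilting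
subcategory vanishes. -/
lemma negShift_hom_zero (hX : IsClusterTilting X) {W X' : C} (hW : X W) (hX' : X X')
    (g : (shiftFunctor C (-1 : ℤ)).obj W ⟶ X') : g = 0 := by
  apply (shiftFunctor C (1 : ℤ)).map_injective
  have h0 : (shiftFunctorCompIsoId C (-1 : ℤ) (1 : ℤ) (by ring)).inv.app W ≫
      (shiftFunctor C (1 : ℤ)).map g = 0 := hX.hom_shift_zero hW hX' _
  rw [Functor.map_zero]
  calc (shiftFunctor C (1 : ℤ)).map g
      = ((shiftFunctorCompIsoId C (-1 : ℤ) (1 : ℤ) (by ring)).hom.app W ≫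
          (shiftFunctorCompIsoId C (-1 : ℤ) (1 : ℤ) (by ring)).inv.app W) ≫
          (shiftFunctor C (1 : ℤ)).map g := by
        rw [Iso.hom_inv_id_app, Category.id_comp]
    _ = 0 := by rw [Category.assoc, h0, comp_zero]

/-- If the third map of a distinguished triangle factors through `X`, then every map from
the first object to an object of `X` extends along the first map. -/
lemma extend_along_mor₁ (hX : IsClusterTilting X)
    {A₀ A₁ A₂ : C} {f₀ : A₀ ⟶ A₁} {f₁ : A₁ ⟶ A₂} {f₂ : A₂ ⟶ A₀⟦(1 : ℤ)⟧}
    (hT : Triangle.mk f₀ f₁ f₂ ∈ distTriang C) (hf₂ : FactorsThru X f₂)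
    {X' : C} (hX' : X X') (e : A₀ ⟶ X') : ∃ e' : A₁ ⟶ X', f₀ ≫ e' = e := by
  have hT' := inv_rot_of_distTriang _ hT
  obtain ⟨X₀, a, b, hX₀, hab⟩ := hf₂
  have hz : (Triangle.mk f₀ f₁ f₂).invRotate.mor₁ ≫ e = 0 := by
    have hinner : (shiftFunctor C (-1 : ℤ)).map b ≫
        (shiftFunctorCompIsoId C (1 : ℤ) (-1 : ℤ) (by ring)).hom.app A₀ ≫ e = 0 :=
      negShift_hom_zero hX hX₀ hX' _
    change (-(shiftFunctor C (-1 : ℤ)).map f₂ ≫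
      (shiftFunctorCompIsoId C (1 : ℤ) (-1 : ℤ) (by ring)).hom.app A₀) ≫ e = 0
    rw [← hab, Functor.map_comp]
    simp only [Preadditive.neg_comp, Category.assoc, hinner, comp_zero, neg_zero]
  obtain ⟨g, hg⟩ := Triangle.yoneda_exact₂ _ hT' e hz
  exact ⟨g, hg.symm⟩

end Aux

/-- For a distinguished triangle `A₀ ⟶ A₁ ⟶ A₂ ⟶ ΣA₀` over a cluster-tilting
subcategory `X`, if `f₂` factors through `X` then `f̄₁` is a cokernel of `f̄₀` in `C/X`. -/
theorem cokernel_of_factorsThru [IsIdempotentComplete C]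
    (X : C → Prop) (hX : IsClusterTilting X)
    {A₀ A₁ A₂ : C} (f₀ : A₀ ⟶ A₁) (f₁ : A₁ ⟶ A₂) (f₂ : A₂ ⟶ A₀⟦(1 : ℤ)⟧)
    (hT : Triangle.mk f₀ f₁ f₂ ∈ distTriang C)
    (hf₂ : FactorsThru X f₂) :
    (quotFunctor X).map f₀ ≫ (quotFunctor X).map f₁ = (quotFunctor X).map (0 : A₀ ⟶ A₂) ∧
    ∀ (Z : C) (φ : (quotFunctor X).obj A₁ ⟶ (quotFunctor X).obj Z),
      (quotFunctor X).map f₀ ≫ φ = (quotFunctor X).map (0 : A₀ ⟶ Z) →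
      ∃! ψ : (quotFunctor X).obj A₂ ⟶ (quotFunctor X).obj Z,
        (quotFunctor X).map f₁ ≫ ψ = φ := by
  haveI : Congruence (homRelOf X) := congruence_homRelOf hX.toIsAdditiveClosed
  have hcomp : f₀ ≫ f₁ = 0 := comp_distTriang_mor_zero₁₂ _ hT
  constructor
  · rw [← Functor.map_comp, hcomp]
  · intro Z φ hφ
    obtain ⟨p, rfl⟩ := (quotFunctor X).map_surjective φ
    rw [← Functor.map_comp] at hφ
    have hrel : FactorsThru X (f₀ ≫ p) := by
      have h1 := (Quotient.functor_map_eq_iff (homRelOf X) _ _).1 hφ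
      have : FactorsThru X (f₀ ≫ p - 0) := h1
      rwa [sub_zero] at this
    obtain ⟨X', g, h, hX', hgh⟩ := hrel
    obtain ⟨k, hk⟩ := extend_along_mor₁ hX hT hf₂ hX' g
    have h1 : f₀ ≫ (p - k ≫ h) = 0 := by
      rw [Preadditive.comp_sub, ← Category.assoc, hk, hgh, sub_self]
    obtain ⟨ψ₀, hψ₀⟩ : ∃ ψ₀ : A₂ ⟶ Z, p - k ≫ h = f₁ ≫ ψ₀ :=
      Triangle.yoneda_exact₂ _ hT (p - k ≫ h) h1
    have hr1 : homRelOf X (f₁ ≫ ψ₀) p := by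
      show FactorsThru X (f₁ ≫ ψ₀ - p)
      have heq : f₁ ≫ ψ₀ - p = -(k ≫ h) := by rw [← hψ₀]; abel
      rw [heq]
      exact factorsThru_neg ⟨X', k, h, hX', rfl⟩
    refine ⟨(quotFunctor X).map ψ₀, ?_, ?_⟩
    · show (quotFunctor X).map f₁ ≫ (quotFunctor X).map ψ₀ = (quotFunctor X).map p
      rw [← Functor.map_comp, Quotient.functor_map_eq_iff]
      exact hr1
    · intro ψ' hψ'
      obtain ⟨δ', rfl⟩ := (quotFunctor X).map_surjective ψ'
      rw [← Functor.map_comp] at hψ'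
      have hr2 : homRelOf X (f₁ ≫ δ') p :=
        (Quotient.functor_map_eq_iff (homRelOf X) _ _).1 hψ'
      have hfac : FactorsThru X (f₁ ≫ (δ' - ψ₀)) := by
        have h3 : FactorsThru X ((f₁ ≫ δ' - p) + (p - f₁ ≫ ψ₀)) :=
          factorsThru_add hX.toIsAdditiveClosed hr2 (by
            have : FactorsThru X (-(f₁ ≫ ψ₀ - p)) := factorsThru_neg hr1
            rwa [neg_sub] at this)
        have heq : (f₁ ≫ δ' - p) + (p - f₁ ≫ ψ₀) = f₁ ≫ (δ' - ψ₀) := by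
          rw [Preadditive.comp_sub]; abel
        rwa [heq] at h3
      rw [Quotient.functor_map_eq_iff]
      show FactorsThru X (δ' - ψ₀)
      obtain ⟨X'', u, v, hX'', huv⟩ := hfac
      obtain ⟨Y₀, Y₁, pm, q, r, hY₀, hY₁, hTZ⟩ := hX.exists_triangle Z
      have hvr : v ≫ r = 0 := hX.hom_shift_zero hX'' hY₀ _
      obtain ⟨v', hv'⟩ : ∃ v' : X'' ⟶ Y₁, v = v' ≫ q :=
        Triangle.coyoneda_exact₃ _ hTZ v hvr
      have h2 : (f₀ ≫ (u ≫ v')) ≫ q = 0 := by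
        have e0 : f₀ ≫ u ≫ v = 0 := by
          rw [huv, ← Category.assoc, hcomp, zero_comp]
        rw [Category.assoc, Category.assoc, ← hv', e0]
      obtain ⟨e, he⟩ : ∃ e : A₀ ⟶ Y₀, f₀ ≫ (u ≫ v') = e ≫ pm :=
        Triangle.coyoneda_exact₂ _ hTZ (f₀ ≫ (u ≫ v')) h2
      obtain ⟨e', he'⟩ := extend_along_mor₁ hX hT hf₂ hY₀ e
      have h3 : f₀ ≫ (u ≫ v' - e' ≫ pm) = 0 := by
        rw [Preadditive.comp_sub, he, ← Category.assoc, he', sub_self]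
      obtain ⟨t, ht⟩ : ∃ t : A₂ ⟶ Y₁, u ≫ v' - e' ≫ pm = f₁ ≫ t :=
        Triangle.yoneda_exact₂ _ hT (u ≫ v' - e' ≫ pm) h3
      have hpmq : pm ≫ q = 0 := comp_distTriang_mor_zero₁₂ _ hTZ
      have h4 : f₁ ≫ ((δ' - ψ₀) - t ≫ q) = 0 := by
        have e1 : f₁ ≫ (δ' - ψ₀) = u ≫ v' ≫ q := by rw [← huv, hv']
        have e2 : f₁ ≫ t ≫ q = (u ≫ v' - e' ≫ pm) ≫ q := by
          rw [← Category.assoc, ← ht]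
        rw [Preadditive.comp_sub, e1, e2, Preadditive.sub_comp, Category.assoc,
          Category.assoc, hpmq, comp_zero, sub_zero, sub_self]
      obtain ⟨w, hw⟩ : ∃ w : A₀⟦(1 : ℤ)⟧ ⟶ Z, (δ' - ψ₀) - t ≫ q = f₂ ≫ w :=
        Triangle.yoneda_exact₃ _ hT ((δ' - ψ₀) - t ≫ q) h4
      have hfin : δ' - ψ₀ = f₂ ≫ w + t ≫ q := by rw [← hw]; abel
      rw [hfin]
      exact factorsThru_add hX.toIsAdditiveClosed
        (factorsThru_comp_right w hf₂) ⟨Y₁, t, q, hY₁, rfl⟩
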